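/- The abelianization of the hybrid H(3) is a finite group. -/

import Mathlib

noncomputable section

open Matrix Complex

/-- GL(3,ℂ): the group of invertible 3×3 complex matrices. -/
abbrev GL3 : Type := (Matrix (Fin 3) (Fin 3) ℂ)ˣ

/-- PGL(3,ℂ): the quotient of GL(3,ℂ) by its center. -/
abbrev PGL3 : Type := GL3 ⧸ Subgroup.center GL3

/-- The projection GL(3,ℂ) → PGL(3,ℂ). -/
def pgl : GL3 →* PGL3 := QuotientGroup.mk' (Subgroup.center GL3)

/-- The class [M] ∈ PGL(3,ℂ) of an (invertible) matrix M. -/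
noncomputable def cls (M : Matrix (Fin 3) (Fin 3) ℂ) : PGL3 := by
  classical exact if h : IsUnit M then pgl h.unit else 1

/-- The Hermitian matrix of signature (2,1) defining the Siegel model. -/
def Hform : Matrix (Fin 3) (Fin 3) ℂ := !![0,0,1; 0,1,0; 1,0,0]

lemma Hform_mul_Hform : Hform * Hform = 1 := by
  rw [Hform, Matrix.mul_fin_three, Matrix.one_fin_three]
  norm_num

/-- U(2,1,O): the subgroup of GL(3,ℂ) of matrices with entries in O
satisfying Mᴴ H M = H, for O a subring of ℂ closed under conjugation. -/
def U21 (O : Subring ℂ) (hO : ∀ z ∈ O, (starRingEnd ℂ) z ∈ O) : Subgroup GL3 where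
  carrier := {M : GL3 | (∀ i j, (M : Matrix (Fin 3) (Fin 3) ℂ) i j ∈ O) ∧
      (M : Matrix (Fin 3) (Fin 3) ℂ)ᴴ * Hform * (M : Matrix (Fin 3) (Fin 3) ℂ) = Hform}
  one_mem' := by
    constructor
    · intro i j
      by_cases h : i = j <;> simp [Matrix.one_apply, h, Subring.one_mem, Subring.zero_mem]
    · simp
  mul_mem' := by
    rintro a b ⟨ha1, ha2⟩ ⟨hb1, hb2⟩
    constructor
    · intro i j
      rw [Units.val_mul, Matrix.mul_apply]
      exact Subring.sum_mem _ fun k _ => Subring.mul_mem _ (ha1 i k) (hb1 k j)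
    · rw [Units.val_mul, Matrix.conjTranspose_mul]
      calc (↑b)ᴴ * (↑a)ᴴ * Hform * ((↑a : Matrix (Fin 3) (Fin 3) ℂ) * ↑b)
          = (↑b)ᴴ * ((↑a)ᴴ * Hform * ↑a) * ↑b := by simp only [mul_assoc]
        _ = (↑b)ᴴ * Hform * ↑b := by rw [ha2]
        _ = Hform := hb2
  inv_mem' := by
    rintro a ⟨ha1, ha2⟩
    have hBA : (Hform * (a.val)ᴴ * Hform) * a.val = 1 := by
      calc (Hform * (a.val)ᴴ * Hform) * a.val
          = Hform * ((a.val)ᴴ * Hform * a.val) := by simp only [mul_assoc]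
        _ = Hform * Hform := by rw [ha2]
        _ = 1 := Hform_mul_Hform
    have hInv : (a⁻¹).val = Hform * (a.val)ᴴ * Hform :=
      Units.inv_eq_of_mul_eq_one_left hBA
    have hab : a.val * (a⁻¹).val = 1 := a.mul_inv
    constructor
    · intro i j
      rw [hInv]
      simp only [Matrix.mul_apply, Fin.sum_univ_three]
      fin_cases i <;> fin_cases j <;>
        simp [Hform, Matrix.conjTranspose_apply, Matrix.vecHead, Matrix.vecTail, Function.comp] <;>
        exact hO _ (ha1 _ _)
    · calc ((a⁻¹).val)ᴴ * Hform * (a⁻¹).val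
          = ((a⁻¹).val)ᴴ * ((a.val)ᴴ * Hform * a.val) * (a⁻¹).val := by rw [ha2]
        _ = (a.val * (a⁻¹).val)ᴴ * Hform * (a.val * (a⁻¹).val) := by
            rw [Matrix.conjTranspose_mul]; simp only [mul_assoc]
        _ = Hform := by rw [hab]; simp

/-- PU(2,1,O): the image of U(2,1,O) in PGL(3,ℂ). -/
def PU21 (O : Subring ℂ) (hO : ∀ z ∈ O, (starRingEnd ℂ) z ∈ O) : Subgroup PGL3 :=
  (U21 O hO).map pgl

lemma conjClosed (s : Set ℂ) (h : ∀ z ∈ s, (starRingEnd ℂ) z ∈ Subring.closure s) :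
    ∀ z ∈ Subring.closure s, (starRingEnd ℂ) z ∈ Subring.closure s := by
  intro z hz
  have hle : Subring.closure s ≤ (Subring.closure s).comap (starRingEnd ℂ) :=
    Subring.closure_le.mpr fun x hx => Subring.mem_comap.mpr (h x hx)
  exact Subring.mem_comap.mp (hle hz)


-- test ring pieces
section rings
open Matrix Complex

/-- ω = (−1+i√3)/2, a primitive cube root of unity. -/
def omega3 : ℂ := (-1 + Complex.I * (Real.sqrt 3 : ℝ)) / 2

/-- O₃ = ℤ[ω], the Eisenstein integers. -/
def O3 : Subring ℂ := Subring.closure {omega3}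

lemma conj_omega3 : (starRingEnd ℂ) omega3 = -1 - omega3 := by
  rw [omega3]
  rw [map_div₀, map_add, _root_.map_mul, Complex.conj_I, Complex.conj_ofReal]
  rw [map_neg, _root_.map_one, _root_.map_ofNat]
  ring

lemma hO3 : ∀ z ∈ O3, (starRingEnd ℂ) z ∈ O3 := by
  apply conjClosed
  intro z hz
  rw [Set.mem_singleton_iff] at hz
  subst hz
  rw [conj_omega3]
  exact sub_mem (neg_mem (Subring.one_mem _)) (Subring.subset_closure rfl)

/-- O₁ = ℤ[i], the Gaussian integers. -/
def O1 : Subring ℂ := Subring.closure {Complex.I}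

lemma hO1 : ∀ z ∈ O1, (starRingEnd ℂ) z ∈ O1 := by
  apply conjClosed
  intro z hz
  rw [Set.mem_singleton_iff] at hz
  subst hz
  rw [Complex.conj_I]
  exact neg_mem (Subring.subset_closure rfl)

/-- τ = (1+i√7)/2. -/
def tau7 : ℂ := (1 + Complex.I * (Real.sqrt 7 : ℝ)) / 2

/-- O₇ = ℤ[(1+i√7)/2], the ring of integers of ℚ(i√7). -/
def O7 : Subring ℂ := Subring.closure {tau7}

lemma conj_tau7 : (starRingEnd ℂ) tau7 = 1 - tau7 := by
  rw [tau7]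
  rw [map_div₀, map_add, _root_.map_mul, Complex.conj_I, Complex.conj_ofReal]
  rw [_root_.map_one, _root_.map_ofNat]
  ring

lemma hO7 : ∀ z ∈ O7, (starRingEnd ℂ) z ∈ O7 := by
  apply conjClosed
  intro z hz
  rw [Set.mem_singleton_iff] at hz
  subst hz
  rw [conj_tau7]
  exact sub_mem (Subring.one_mem _) (Subring.subset_closure rfl)

end rings

section matrices
open Matrix Complex

/-- The Cayley transform J. -/
def Jmat : Matrix (Fin 3) (Fin 3) ℂ := !![1,1,0; 0,1,-1; 1,1,-1]

-- d = 3 ------------------------------------------------------------------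
def E1d3 : Matrix (Fin 3) (Fin 3) ℂ :=
  !![omega3^2, omega3^2 - 1, omega3 + 2;
     Complex.I * (Real.sqrt 3 : ℝ), 1 + Complex.I * (Real.sqrt 3 : ℝ), omega3^2 - 1;
     Complex.I * (Real.sqrt 3 : ℝ), Complex.I * (Real.sqrt 3 : ℝ), omega3^2]

def U1d3 : Matrix (Fin 3) (Fin 3) ℂ :=
  !![1, 0, Complex.I * (Real.sqrt 3 : ℝ); 0, 1, 0; 0, 0, 1]

def U2d3 : Matrix (Fin 3) (Fin 3) ℂ :=
  !![1, 0, 0; 0, 1, 0; Complex.I * (Real.sqrt 3 : ℝ), 0, 1]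

def I1d3 : Matrix (Fin 3) (Fin 3) ℂ := Jmat⁻¹ * !![-1,0,0; 0,1,0; 0,0,-1] * Jmat

def I2d3 : Matrix (Fin 3) (Fin 3) ℂ := Jmat⁻¹ * !![1,0,0; 0,-1,0; 0,0,-1] * Jmat

/-- The Falbel–Parker generators of PU(2,1,O₃). -/
def Pd3 : Matrix (Fin 3) (Fin 3) ℂ := !![1, 1, omega3; 0, omega3, -omega3; 0, 0, 1]

def Qd3 : Matrix (Fin 3) (Fin 3) ℂ := !![1, 1, omega3; 0, -1, 1; 0, 0, 1]

def Rd3 : Matrix (Fin 3) (Fin 3) ℂ := !![0, 0, 1; 0, -1, 0; 1, 0, 0]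

/-- The hybrid H(3). -/
def H3 : Subgroup PGL3 :=
  Subgroup.closure {cls E1d3, cls U1d3, cls U2d3, cls I1d3, cls I2d3}

/-- The hybrid H̃(3). -/
def Ht3 : Subgroup PGL3 := Subgroup.closure {cls E1d3, cls U1d3, cls U2d3}

/-- The hybrid H'(3). -/
def H'3 : Subgroup PGL3 :=
  Subgroup.closure {cls (Pd3^2 * (Rd3 * Qd3^2) * (Pd3^2)⁻¹), cls (Qd3^2), cls (Rd3 * Qd3^2 * Rd3)}

/-- The Eisenstein–Picard modular group Γ(3) = PU(2,1,O₃). -/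
def Gamma3 : Subgroup PGL3 := PU21 O3 hO3

-- d = 1 ------------------------------------------------------------------
def E1d1 : Matrix (Fin 3) (Fin 3) ℂ :=
  !![Complex.I, -1 + Complex.I, 1 - Complex.I;
     -2 * Complex.I, 1 - 2 * Complex.I, -1 + Complex.I;
     -2 * Complex.I, -2 * Complex.I, Complex.I]

def U1d1 : Matrix (Fin 3) (Fin 3) ℂ := !![1, 0, Complex.I; 0, 1, 0; 0, 0, 1]

def E2d1 : Matrix (Fin 3) (Fin 3) ℂ :=
  !![Complex.I, 2 * Complex.I, -2 * Complex.I;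
     1 - Complex.I, 1 - 2 * Complex.I, 2 * Complex.I;
     1 - Complex.I, 1 - Complex.I, Complex.I]

def U2d1 : Matrix (Fin 3) (Fin 3) ℂ := !![1, 0, 0; 0, 1, 0; Complex.I, 0, 1]

/-- The Falbel–Francsics–Parker generators of PU(2,1,O₁). -/
def I0d1 : Matrix (Fin 3) (Fin 3) ℂ := !![0, 0, 1; 0, -1, 0; 1, 0, 0]

def Qd1 : Matrix (Fin 3) (Fin 3) ℂ :=
  !![1, 1 - Complex.I, -1; 0, -1, 1 + Complex.I; 0, 0, 1]

def Td1 : Matrix (Fin 3) (Fin 3) ℂ := !![1, 0, Complex.I; 0, 1, 0; 0, 0, 1]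

def R1d1 : Matrix (Fin 3) (Fin 3) ℂ := Jmat⁻¹ * !![Complex.I,0,0; 0,1,0; 0,0,1] * Jmat

def R2d1 : Matrix (Fin 3) (Fin 3) ℂ := Jmat⁻¹ * !![1,0,0; 0,Complex.I,0; 0,0,1] * Jmat

/-- The hybrid H(1). -/
def H1 : Subgroup PGL3 := Subgroup.closure {cls E1d1, cls U1d1, cls E2d1, cls U2d1}

/-- The hybrid H'(1). -/
def H'1 : Subgroup PGL3 := Subgroup.closure {cls R1d1, cls R2d1, cls U1d1, cls U2d1}

/-- The Gauss–Picard modular group Γ(1) = PU(2,1,O₁). -/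
def Gamma1 : Subgroup PGL3 := PU21 O1 hO1

-- d = 7 ------------------------------------------------------------------
def U1d7 : Matrix (Fin 3) (Fin 3) ℂ :=
  !![1, 0, Complex.I * (Real.sqrt 7 : ℝ); 0, 1, 0; 0, 0, 1]

def U2d7 : Matrix (Fin 3) (Fin 3) ℂ :=
  !![1, 0, 0; 0, 1, 0; Complex.I * (Real.sqrt 7 : ℝ), 0, 1]

def A1d7 : Matrix (Fin 3) (Fin 3) ℂ :=
  !![-(1/2) + Complex.I * (Real.sqrt 7 : ℝ) / 2, -(3/2) + Complex.I * (Real.sqrt 7 : ℝ) / 2,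
       1/2 - Complex.I * (Real.sqrt 7 : ℝ) / 2;
     1, 2, -(3/2) + Complex.I * (Real.sqrt 7 : ℝ) / 2;
     1, 1, -(1/2) + Complex.I * (Real.sqrt 7 : ℝ) / 2]

def B1d7 : Matrix (Fin 3) (Fin 3) ℂ := !![1, 0, 0; -2, -1, 0; -2, -2, 1]

def A2d7 : Matrix (Fin 3) (Fin 3) ℂ :=
  !![-(1/2) + Complex.I * (Real.sqrt 7 : ℝ) / 2, -1, 1;
     3/2 - Complex.I * (Real.sqrt 7 : ℝ) / 2, 2, -1;
     1/2 - Complex.I * (Real.sqrt 7 : ℝ) / 2, 3/2 - Complex.I * (Real.sqrt 7 : ℝ) / 2,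
       -(1/2) + Complex.I * (Real.sqrt 7 : ℝ) / 2]

def B2d7 : Matrix (Fin 3) (Fin 3) ℂ := !![1, 2, -2; 0, -1, 2; 0, 0, 1]

/-- The Mark–Paupert generators of PU(2,1,O₇). -/
def T1d7 : Matrix (Fin 3) (Fin 3) ℂ :=
  !![1, -1, -(1/2) + Complex.I * (Real.sqrt 7 : ℝ) / 2; 0, 1, 1; 0, 0, 1]

def Rd7 : Matrix (Fin 3) (Fin 3) ℂ := !![1, 0, 0; 0, -1, 0; 0, 0, 1]

def Id7 : Matrix (Fin 3) (Fin 3) ℂ := !![0, 0, 1; 0, -1, 0; 1, 0, 0]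

/-- The hybrid H(7). -/
def H7 : Subgroup PGL3 :=
  Subgroup.closure {cls U1d7, cls U2d7, cls A1d7, cls A2d7, cls B1d7, cls B2d7}

/-- The Picard modular group Γ(7) = PU(2,1,O₇). -/
def Gamma7 : Subgroup PGL3 := PU21 O7 hO7

end matrices

section presented
/-- The relators c², a⁶, aca⁻¹c⁻¹, (ab)³, (cab)³, b² in the free group on a,b,c
(a = of 0, b = of 1, c = of 2). -/
def relsG : Set (FreeGroup (Fin 3)) :=
  {(FreeGroup.of 2)^2, (FreeGroup.of 0)^6,
   FreeGroup.of 0 * FreeGroup.of 2 * (FreeGroup.of 0)⁻¹ * (FreeGroup.of 2)⁻¹,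
   (FreeGroup.of 0 * FreeGroup.of 1)^3,
   (FreeGroup.of 2 * FreeGroup.of 0 * FreeGroup.of 1)^3,
   (FreeGroup.of 1)^2}

/-- The presented group G = ⟨a,b,c | c², a⁶, [a,c], (ab)³, (cab)³, b²⟩. -/
abbrev Gpres := PresentedGroup relsG
end presented


section stmt6aux
open Matrix Complex

lemma hi3' : Complex.I * ((Real.sqrt 3 : ℝ) : ℂ) = 2 * omega3 + 1 := by
  rw [omega3]; ring

lemma hw' : omega3 ^ 2 + omega3 + 1 = 0 := by
  have hs : (Complex.I * ((Real.sqrt 3 : ℝ) : ℂ)) ^ 2 = -3 := by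
    rw [mul_pow, Complex.I_sq, ← Complex.ofReal_pow, Real.sq_sqrt (by norm_num)]
    norm_num
  rw [omega3]; linear_combination (1 / 4 : ℂ) * hs

lemma hJinv : Jmat⁻¹ = !![0,-1,1; 1,1,-1; 1,0,-1] := by
  apply Matrix.inv_eq_right_inv
  rw [Jmat, Matrix.mul_fin_three, Matrix.one_fin_three]
  norm_num

lemma hI1' : I1d3 = !![-1,-2,2; 0,1,-2; 0,0,-1] := by
  rw [I1d3, hJinv, Jmat, Matrix.mul_fin_three, Matrix.mul_fin_three]
  norm_num

lemma hI2' : I2d3 = !![-1,0,0; 2,1,0; 2,2,-1] := by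
  rw [I2d3, hJinv, Jmat, Matrix.mul_fin_three, Matrix.mul_fin_three]
  norm_num

lemma mE : E1d3 * E1d3 * E1d3 = 1 := by
  rw [E1d3, hi3', Matrix.mul_fin_three, Matrix.mul_fin_three, Matrix.one_fin_three]
  refine congrArg _ (Matrix.vec3_eq (Matrix.vec3_eq ?_ ?_ ?_) (Matrix.vec3_eq ?_ ?_ ?_)
    (Matrix.vec3_eq ?_ ?_ ?_))
  · linear_combination ((5) * omega3 + (7) * omega3^2 + (5) * omega3^3 + (1) * omega3^4) * hw'
  · linear_combination ((5) * omega3 + (7) * omega3^2 + (5) * omega3^3 + (1) * omega3^4) * hw'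
  · linear_combination ((2) + (2) * omega3 + (3) * omega3^2 + (3) * omega3^3 + (2) * omega3^4) * hw'
  · linear_combination ((2) + (9) * omega3 + (13) * omega3^2 + (6) * omega3^3) * hw'
  · linear_combination ((2) + (9) * omega3 + (13) * omega3^2 + (6) * omega3^3) * hw'
  · linear_combination ((5) * omega3 + (7) * omega3^2 + (5) * omega3^3 + (1) * omega3^4) * hw'
  · linear_combination ((2) + (9) * omega3 + (13) * omega3^2 + (6) * omega3^3) * hw'
  · linear_combination ((2) + (9) * omega3 + (13) * omega3^2 + (6) * omega3^3) * hw'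
  · linear_combination ((5) * omega3 + (7) * omega3^2 + (5) * omega3^3 + (1) * omega3^4) * hw'

lemma mI1 : I1d3 * I1d3 = 1 := by
  rw [hI1', Matrix.mul_fin_three, Matrix.one_fin_three]; norm_num

lemma mI2 : I2d3 * I2d3 = 1 := by
  rw [hI2', Matrix.mul_fin_three, Matrix.one_fin_three]; norm_num

lemma mW1 : U1d3 * E1d3 * I2d3 * U1d3 * I2d3 * E1d3 = 1 := by
  rw [U1d3, E1d3, hI2', hi3', Matrix.mul_fin_three, Matrix.mul_fin_three,
    Matrix.mul_fin_three, Matrix.mul_fin_three, Matrix.mul_fin_three, Matrix.one_fin_three]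
  refine congrArg _ (Matrix.vec3_eq (Matrix.vec3_eq ?_ ?_ ?_) (Matrix.vec3_eq ?_ ?_ ?_)
    (Matrix.vec3_eq ?_ ?_ ?_))
  · linear_combination ((4) + (23) * omega3 + (39) * omega3^2 + (36) * omega3^3 + (16) * omega3^4) * hw'
  · linear_combination ((4) + (23) * omega3 + (39) * omega3^2 + (36) * omega3^3 + (16) * omega3^4) * hw'
  · linear_combination ((8) + (27) * omega3 + (41) * omega3^2 + (28) * omega3^3 + (8) * omega3^4) * hw'
  · linear_combination ((2) + (8) * omega3 + (12) * omega3^2 + (8) * omega3^3) * hw'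
  · linear_combination ((2) + (8) * omega3 + (12) * omega3^2 + (8) * omega3^3) * hw'
  · linear_combination ((2) + (11) * omega3 + (11) * omega3^2 + (4) * omega3^3) * hw'
  · linear_combination ((2) + (8) * omega3 + (12) * omega3^2 + (8) * omega3^3) * hw'
  · linear_combination ((2) + (8) * omega3 + (12) * omega3^2 + (8) * omega3^3) * hw'
  · linear_combination ((2) + (11) * omega3 + (11) * omega3^2 + (4) * omega3^3) * hw'

lemma mW2 : U2d3 * U1d3 * U2d3 * U1d3 * U2d3 * U1d3 = 1 := by
  rw [U2d3, U1d3, hi3', Matrix.mul_fin_three, Matrix.mul_fin_three,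
    Matrix.mul_fin_three, Matrix.mul_fin_three, Matrix.mul_fin_three, Matrix.one_fin_three]
  refine congrArg _ (Matrix.vec3_eq (Matrix.vec3_eq ?_ ?_ ?_) (Matrix.vec3_eq ?_ ?_ ?_)
    (Matrix.vec3_eq ?_ ?_ ?_))
  · linear_combination ((4) + (16) * omega3 + (16) * omega3^2) * hw'
  · linear_combination (0 : ℂ) * hw'
  · linear_combination ((8) + (32) * omega3 + (48) * omega3^2 + (32) * omega3^3) * hw'
  · linear_combination (0 : ℂ) * hw'
  · linear_combination (0 : ℂ) * hw'
  · linear_combination (0 : ℂ) * hw'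
  · linear_combination ((8) + (32) * omega3 + (48) * omega3^2 + (32) * omega3^3) * hw'
  · linear_combination (0 : ℂ) * hw'
  · linear_combination ((12) + (64) * omega3 + (128) * omega3^2 + (128) * omega3^3 + (64) * omega3^4) * hw'

lemma hUE : IsUnit E1d3 :=
  (Matrix.isUnit_iff_isUnit_det _).mpr <| Matrix.isUnit_det_of_right_inverse (B := E1d3 * E1d3) (by simpa only [mul_assoc] using mE)

lemma hUI1 : IsUnit I1d3 := (Matrix.isUnit_iff_isUnit_det _).mpr <| Matrix.isUnit_det_of_right_inverse mI1

lemma hUI2 : IsUnit I2d3 := (Matrix.isUnit_iff_isUnit_det _).mpr <| Matrix.isUnit_det_of_right_inverse mI2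

lemma hUU1 : IsUnit U1d3 :=
  (Matrix.isUnit_iff_isUnit_det _).mpr <| Matrix.isUnit_det_of_right_inverse (B := E1d3 * I2d3 * U1d3 * I2d3 * E1d3)
    (by simpa only [mul_assoc] using mW1)

lemma hUU2 : IsUnit U2d3 :=
  (Matrix.isUnit_iff_isUnit_det _).mpr <| Matrix.isUnit_det_of_right_inverse (B := U1d3 * U2d3 * U1d3 * U2d3 * U1d3)
    (by simpa only [mul_assoc] using mW2)

lemma cls_of_isUnit {M : Matrix (Fin 3) (Fin 3) ℂ} (h : IsUnit M) : cls M = pgl h.unit := by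
  rw [cls]; rw [dif_pos h]

lemma cls_mul {M N : Matrix (Fin 3) (Fin 3) ℂ} (hM : IsUnit M) (hN : IsUnit N) :
    cls (M * N) = cls M * cls N := by
  rw [cls_of_isUnit (hM.mul hN), cls_of_isUnit hM, cls_of_isUnit hN, ← _root_.map_mul]
  congr 1
  exact Units.ext (by simp)

lemma cls_one : cls (1 : Matrix (Fin 3) (Fin 3) ℂ) = 1 := by
  rw [cls_of_isUnit isUnit_one]
  have h : (isUnit_one : IsUnit (1 : Matrix (Fin 3) (Fin 3) ℂ)).unit = 1 := Units.ext (by simp)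
  rw [h, _root_.map_one]

lemma pE : cls E1d3 * cls E1d3 * cls E1d3 = 1 := by
  rw [← cls_mul hUE hUE, ← cls_mul (hUE.mul hUE) hUE, mE, cls_one]

lemma pI1 : cls I1d3 * cls I1d3 = 1 := by
  rw [← cls_mul hUI1 hUI1, mI1, cls_one]

lemma pI2 : cls I2d3 * cls I2d3 = 1 := by
  rw [← cls_mul hUI2 hUI2, mI2, cls_one]

lemma pW1 : cls U1d3 * cls E1d3 * cls I2d3 * cls U1d3 * cls I2d3 * cls E1d3 = 1 := by
  rw [← cls_mul hUU1 hUE, ← cls_mul (hUU1.mul hUE) hUI2,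
    ← cls_mul ((hUU1.mul hUE).mul hUI2) hUU1,
    ← cls_mul (((hUU1.mul hUE).mul hUI2).mul hUU1) hUI2,
    ← cls_mul ((((hUU1.mul hUE).mul hUI2).mul hUU1).mul hUI2) hUE, mW1, cls_one]

lemma pW2 : cls U2d3 * cls U1d3 * cls U2d3 * cls U1d3 * cls U2d3 * cls U1d3 = 1 := by
  rw [← cls_mul hUU2 hUU1, ← cls_mul (hUU2.mul hUU1) hUU2,
    ← cls_mul ((hUU2.mul hUU1).mul hUU2) hUU1,
    ← cls_mul (((hUU2.mul hUU1).mul hUU2).mul hUU1) hUU2,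
    ← cls_mul ((((hUU2.mul hUU1).mul hUU2).mul hUU1).mul hUU2) hUU1, mW2, cls_one]

-- canonical generators of H3 as elements of the subgroup
lemma heH : cls E1d3 ∈ H3 := Subgroup.subset_closure (Set.mem_insert _ _)
lemma huH : cls U1d3 ∈ H3 :=
  Subgroup.subset_closure (Set.mem_insert_of_mem _ (Set.mem_insert _ _))
lemma hvH : cls U2d3 ∈ H3 :=
  Subgroup.subset_closure (Set.mem_insert_of_mem _ (Set.mem_insert_of_mem _ (Set.mem_insert _ _)))
lemma hi1H : cls I1d3 ∈ H3 :=
  Subgroup.subset_closure (Set.mem_insert_of_mem _ (Set.mem_insert_of_mem _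
    (Set.mem_insert_of_mem _ (Set.mem_insert _ _))))
lemma hi2H : cls I2d3 ∈ H3 :=
  Subgroup.subset_closure (Set.mem_insert_of_mem _ (Set.mem_insert_of_mem _
    (Set.mem_insert_of_mem _ (Set.mem_insert_of_mem _ (Set.mem_singleton _)))))

def e3 : ↥H3 := ⟨cls E1d3, heH⟩
def u3 : ↥H3 := ⟨cls U1d3, huH⟩
def v3 : ↥H3 := ⟨cls U2d3, hvH⟩
def i3 : ↥H3 := ⟨cls I1d3, hi1H⟩
def j3 : ↥H3 := ⟨cls I2d3, hi2H⟩

lemma se : e3 * e3 * e3 = 1 := Subtype.ext pE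
lemma si : i3 * i3 = 1 := Subtype.ext pI1
lemma sj : j3 * j3 = 1 := Subtype.ext pI2
lemma sW1 : u3 * e3 * j3 * u3 * j3 * e3 = 1 := Subtype.ext pW1
lemma sW2 : v3 * u3 * v3 * u3 * v3 * u3 = 1 := Subtype.ext pW2

-- abelianization images
lemma ab_e : (Abelianization.of e3) ^ 3 = 1 := by
  rw [← _root_.map_pow, show e3 ^ 3 = 1 from by rw [pow_succ, pow_two]; exact se, _root_.map_one]

lemma ab_i : (Abelianization.of i3) ^ 2 = 1 := by
  rw [← _root_.map_pow, show i3 ^ 2 = 1 from by rw [pow_two]; exact si, _root_.map_one]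

lemma ab_j : (Abelianization.of j3) ^ 2 = 1 := by
  rw [← _root_.map_pow, show j3 ^ 2 = 1 from by rw [pow_two]; exact sj, _root_.map_one]

lemma pow12_helper {G : Type*} [CommGroup G] {a b c : G} (h : a * b * c * a * c * b = 1)
    (hb : b ^ 3 = 1) (hc : c ^ 2 = 1) : a ^ 12 = 1 := by
  have h2 : a ^ 2 * (b ^ 2 * c ^ 2) = 1 := by
    rw [← h]; simp [pow_two, mul_comm, mul_left_comm, mul_assoc]
  have ha : a ^ 2 = (b ^ 2 * c ^ 2)⁻¹ := eq_inv_of_mul_eq_one_left h2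
  have hb12 : (b ^ 2) ^ 6 = 1 := by
    rw [← pow_mul, show 2 * 6 = 3 * 4 from rfl, pow_mul, hb, one_pow]
  have hc12 : (c ^ 2) ^ 6 = 1 := by rw [hc, one_pow]
  calc a ^ 12 = (a ^ 2) ^ 6 := by rw [← pow_mul]
    _ = ((b ^ 2 * c ^ 2)⁻¹) ^ 6 := by rw [ha]
    _ = ((b ^ 2) ^ 6 * (c ^ 2) ^ 6)⁻¹ := by rw [inv_pow, mul_pow]
    _ = 1 := by rw [hb12, hc12, one_mul, inv_one]

lemma ab_u : (Abelianization.of u3) ^ 12 = 1 := by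
  refine pow12_helper ?_ ab_e ab_j
  have := congrArg Abelianization.of sW1
  simpa only [_root_.map_mul, _root_.map_one] using this

lemma ab_v : (Abelianization.of v3) ^ 12 = 1 := by
  have h : Abelianization.of v3 * Abelianization.of u3 * Abelianization.of v3 *
      Abelianization.of u3 * Abelianization.of v3 * Abelianization.of u3 = 1 := by
    have := congrArg Abelianization.of sW2
    simpa only [_root_.map_mul, _root_.map_one] using this
  have h2 : (Abelianization.of v3) ^ 3 * (Abelianization.of u3) ^ 3 = 1 := by
    rw [← h]; simp [pow_succ, pow_two, mul_comm, mul_left_comm, mul_assoc]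
  have hv : (Abelianization.of v3) ^ 3 = ((Abelianization.of u3) ^ 3)⁻¹ :=
    eq_inv_of_mul_eq_one_left h2
  calc (Abelianization.of v3) ^ 12 = ((Abelianization.of v3) ^ 3) ^ 4 := by rw [← pow_mul]
    _ = (((Abelianization.of u3) ^ 3) ^ 4)⁻¹ := by rw [hv, inv_pow]
    _ = ((Abelianization.of u3) ^ 12)⁻¹ := by rw [← pow_mul]
    _ = 1 := by rw [ab_u, inv_one]

lemma ab_pow12 : ∀ x : ↥H3, (Abelianization.of x) ^ 12 = 1 := by
  set S : Set PGL3 := {cls E1d3, cls U1d3, cls U2d3, cls I1d3, cls I2d3} with hS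
  set f : ↥H3 →* Abelianization ↥H3 :=
    (powMonoidHom 12).comp Abelianization.of with hf
  have htop : Subgroup.closure ((Subtype.val : ↥H3 → PGL3) ⁻¹' S) = ⊤ :=
    Subgroup.closure_closure_coe_preimage
  have hbase : ((Subtype.val : ↥H3 → PGL3) ⁻¹' S) ⊆ (f.ker : Set ↥H3) := by
    intro x hx
    simp only [Set.mem_preimage, hS, Set.mem_insert_iff, Set.mem_singleton_iff] at hx
    have hker : ∀ y : ↥H3, (Abelianization.of y) ^ 12 = 1 → x = y → x ∈ f.ker := by
      rintro y hy rfl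
      exact hy
    rcases hx with h | h | h | h | h
    · exact hker e3 (by rw [show (12 : ℕ) = 3 * 4 from rfl, pow_mul, ab_e, one_pow])
        (Subtype.ext h)
    · exact hker u3 ab_u (Subtype.ext h)
    · exact hker v3 ab_v (Subtype.ext h)
    · exact hker i3 (by rw [show (12 : ℕ) = 2 * 6 from rfl, pow_mul, ab_i, one_pow])
        (Subtype.ext h)
    · exact hker j3 (by rw [show (12 : ℕ) = 2 * 6 from rfl, pow_mul, ab_j, one_pow])
        (Subtype.ext h)
  have hle : (⊤ : Subgroup ↥H3) ≤ f.ker := by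
    rw [← htop]
    exact (Subgroup.closure_le _).mpr hbase
  intro x
  exact hle (Subgroup.mem_top x)

lemma of_surj : Function.Surjective (Abelianization.of : ↥H3 →* Abelianization ↥H3) :=
  fun a => Quot.inductionOn a fun x => ⟨x, rfl⟩

end stmt6aux

/-- the abelianization of the hybrid H(3) is finite. -/
theorem stmt6 : Finite (Abelianization ↥H3) := by
  have hfg : Group.FG ↥H3 := by
    rw [Group.fg_iff_subgroup_fg]
    exact (Subgroup.fg_iff H3).mpr ⟨{cls E1d3, cls U1d3, cls U2d3, cls I1d3, cls I2d3}, rfl,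
      (Set.finite_singleton _).insert _ |>.insert _ |>.insert _ |>.insert _⟩
  haveI := hfg
  haveI : Group.FG (Abelianization ↥H3) := Group.fg_of_surjective of_surj
  refine CommGroup.finite_of_fg_torsion _ ?_
  intro a
  obtain ⟨x, rfl⟩ := of_surj a
  exact isOfFinOrder_iff_pow_eq_one.mpr ⟨12, by norm_num, ab_pow12 x⟩

end
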